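/- (Structure of the incremental function ℓ.) Let W ∈ ℝ^{k×m} and let ℓ : ℝⁿ × ℝⁿ → ℝᵏ satisfy ℓ(x, x) = 0 for all x ∈ ℝⁿ and the cocycle condition Wᵀ(ℓ(x₁, x₂) + ℓ(x₂, x₃) + ℓ(x₃, x₁)) = 0 for all x₁, x₂, x₃ ∈ ℝⁿ. Let r = dim ker(Wᵀ) and let T ∈ ℝ^{k×r} be any matrix whose columns form a basis of ker(Wᵀ). Then there exist functions l : ℝⁿ → ℝᵏ and q : ℝⁿ × ℝⁿ → ℝʳ with q(x, x) = 0 for all x ∈ ℝⁿ, such that ℓ(x, x̄) = l(x) − l(x̄) + T q(x, x̄) for all x, x̄ ∈ ℝⁿ. -/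

import Mathlib

open Matrix

/-- **Structure of the incremental function ℓ.** If `ℓ(x,x) = 0` and `Wᵀ` annihilates the
cocycle `ℓ(x₁,x₂) + ℓ(x₂,x₃) + ℓ(x₃,x₁)`, and the columns of `T` form a basis of `ker(Wᵀ)`
(whose dimension is `r`), then `ℓ(x, x̄) = l(x) − l(x̄) + T q(x, x̄)` for some `l` and some
`q` vanishing on the diagonal. -/
theorem ell_structure {n k m r : ℕ}
    (W : Matrix (Fin k) (Fin m) ℝ)
    (ell : (Fin n → ℝ) → (Fin n → ℝ) → (Fin k → ℝ))
    (hzero : ∀ x, ell x x = 0)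
    (hcocycle : ∀ x1 x2 x3, Wᵀ.mulVec (ell x1 x2 + ell x2 x3 + ell x3 x1) = 0)
    (hr : r = Module.finrank ℝ (LinearMap.ker Wᵀ.mulVecLin))
    (T : Matrix (Fin k) (Fin r) ℝ)
    (hind : LinearIndependent ℝ (fun j : Fin r => Tᵀ j))
    (hspan : Submodule.span ℝ (Set.range fun j : Fin r => Tᵀ j) =
      LinearMap.ker Wᵀ.mulVecLin) :
    ∃ (l : (Fin n → ℝ) → (Fin k → ℝ)) (q : (Fin n → ℝ) → (Fin n → ℝ) → (Fin r → ℝ)),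
      (∀ x, q x x = 0) ∧
      ∀ x xbar, ell x xbar = l x - l xbar + T.mulVec (q x xbar) := by
  classical
  set K := LinearMap.ker Wᵀ.mulVecLin with hK
  -- columns of T as elements of K
  have hmemK : ∀ j : Fin r, Tᵀ j ∈ K := by
    intro j
    rw [← hspan]
    exact Submodule.subset_span ⟨j, rfl⟩
  set f : Fin r → K := fun j => ⟨Tᵀ j, hmemK j⟩ with hf
  have hindf : LinearIndependent ℝ f := by
    apply LinearIndependent.of_comp K.subtype
    exact hind
  have hspanf : ⊤ ≤ Submodule.span ℝ (Set.range f) := by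
    intro v _
    have hv : (v : Fin k → ℝ) ∈ Submodule.span ℝ (Set.range fun j : Fin r => Tᵀ j) := by
      rw [hspan]; exact v.2
    have : Set.range (fun j : Fin r => Tᵀ j) = K.subtype '' Set.range f := by
      ext y; constructor
      · rintro ⟨j, rfl⟩; exact ⟨f j, ⟨j, rfl⟩, rfl⟩
      · rintro ⟨z, ⟨j, rfl⟩, rfl⟩; exact ⟨j, rfl⟩
    rw [this, ← Submodule.map_span] at hv
    obtain ⟨w, hw, hwv⟩ := hv
    have : w = v := Subtype.ext hwv
    rwa [← this]
  let b : Module.Basis (Fin r) ℝ K := Module.Basis.mk hindf hspanf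
  -- define l
  set l : (Fin n → ℝ) → (Fin k → ℝ) := fun x => ell x 0 with hl
  -- discrepancy lies in K
  have hd : ∀ x xbar, ell x xbar - l x + l xbar ∈ K := by
    intro x xbar
    have h1 := hcocycle x xbar 0
    have h2 := hcocycle 0 x x
    rw [hzero] at h2
    simp only [add_zero] at h2
    -- Wᵀ (ℓ 0 x + ℓ x 0) = 0
    have hlin : ∀ v, Wᵀ.mulVec v = Wᵀ.mulVecLin v := fun v => rfl
    rw [hlin] at h1 h2
    show Wᵀ.mulVecLin _ = 0
    have e1 : Wᵀ.mulVecLin (ell x xbar + ell xbar 0 + ell 0 x) = 0 := h1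
    have e2 : Wᵀ.mulVecLin (ell 0 x + ell x 0) = 0 := h2
    simp only [map_add] at e1 e2 ⊢
    simp only [map_sub]
    linear_combination (norm := module) e1 - e2
  -- define q
  set d : (Fin n → ℝ) → (Fin n → ℝ) → K := fun x xbar => ⟨ell x xbar - l x + l xbar, hd x xbar⟩
    with hdd
  refine ⟨l, fun x xbar => b.repr (d x xbar), ?_, ?_⟩
  · intro x
    have : d x x = 0 := by
      apply Subtype.ext
      simp [hdd, hzero]
    show ⇑(b.repr (d x x)) = 0
    rw [this, map_zero]
    rfl
  · intro x xbar
    have hrepr : (∑ j, b.repr (d x xbar) j • f j) = d x xbar := by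
      have := Module.Basis.sum_repr b (d x xbar)
      simpa [b, Module.Basis.mk_apply] using this
    have hco : (∑ j, b.repr (d x xbar) j • Tᵀ j) = (d x xbar : Fin k → ℝ) := by
      have := congrArg (K.subtype) hrepr
      simpa [map_sum] using this
    have hmv : T.mulVec (b.repr (d x xbar)) = ∑ j, b.repr (d x xbar) j • Tᵀ j := by
      funext i
      simp [Matrix.mulVec, dotProduct, Finset.sum_apply, mul_comm]
    rw [hmv, hco]
    show ell x xbar = l x - l xbar + (ell x xbar - l x + l xbar)
    abel
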